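/- There exist two non-isomorphic graphs G and H on 6 vertices, cospectral with respect to the adjacency matrix (both having characteristic polynomial λ^6 − 7λ^4 − 4λ^3 + 7λ^2 + 4λ − 1), such that b(G) = 2 and b(H) = 3. -/

import Mathlib

/-- Zero forcing closure: vertices eventually colored blue. -/
inductive SimpleGraph.Forced {V : Type*} (G : SimpleGraph V) (B : Set V) : V → Prop
  | init (v : V) (hv : v ∈ B) : SimpleGraph.Forced G B v
  | force (v w : V) (hv : SimpleGraph.Forced G B v) (hadj : G.Adj v w)
      (hall : ∀ u, G.Adj v u → u ≠ w → SimpleGraph.Forced G B u) : SimpleGraph.Forced G B w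

def SimpleGraph.IsZeroForcingSet {V : Type*} (G : SimpleGraph V) (B : Set V) : Prop :=
  ∀ v, G.Forced B v

noncomputable def SimpleGraph.zeroForcingNumber {V : Type*} (G : SimpleGraph V) : ℕ :=
  sInf {n | ∃ B : Set V, B.ncard = n ∧ G.IsZeroForcingSet B}

/-- closed ball of radius r -/
def SimpleGraph.closedBall {V : Type*} (G : SimpleGraph V) (v : V) (r : ℕ) : Set V :=
  {w | G.edist v w ≤ (r : ℕ∞)}

/-- Burning sequence (alternative characterization). -/
def SimpleGraph.IsBurningSeq {V : Type*} (G : SimpleGraph V) {k : ℕ} (s : Fin k → V) : Prop :=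
  (∀ i j : Fin k, i ≠ j →
      ((((i : ℕ) : ℤ) - ((j : ℕ) : ℤ)).natAbs : ℕ∞) ≤ G.edist (s i) (s j)) ∧
  (⋃ l : Fin k, G.closedBall (s l) (k - 1 - (l : ℕ))) = Set.univ

noncomputable def SimpleGraph.burningNumber {V : Type*} (G : SimpleGraph V) : ℕ :=
  sInf {k | ∃ s : Fin k → V, G.IsBurningSeq s}

/-- Strong product of graphs. -/
def SimpleGraph.strongProd {α β : Type*} (G : SimpleGraph α) (H : SimpleGraph β) :
    SimpleGraph (α × β) where
  Adj x y := (x.1 = y.1 ∧ H.Adj x.2 y.2) ∨ (x.2 = y.2 ∧ G.Adj x.1 y.1) ∨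
    (G.Adj x.1 y.1 ∧ H.Adj x.2 y.2)
  symm := by
    constructor
    rintro ⟨a, b⟩ ⟨c, d⟩ (⟨h1, h2⟩ | ⟨h1, h2⟩ | ⟨h1, h2⟩)
    · exact Or.inl ⟨h1.symm, h2.symm⟩
    · exact Or.inr (Or.inl ⟨h1.symm, h2.symm⟩)
    · exact Or.inr (Or.inr ⟨h1.symm, h2.symm⟩)
  loopless := by
    constructor
    rintro ⟨a, b⟩ (⟨_, h2⟩ | ⟨_, h2⟩ | ⟨h1, _⟩)
    exacts [H.irrefl h2, G.irrefl h2, G.irrefl h1]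

instance {α β : Type*} (G : SimpleGraph α) (H : SimpleGraph β)
    [DecidableEq α] [DecidableEq β] [DecidableRel G.Adj] [DecidableRel H.Adj] :
    DecidableRel (G.strongProd H).Adj :=
  fun _ _ => inferInstanceAs (Decidable (_ ∨ _ ∨ _))

section Hypergraph
variable {V : Type*} [DecidableEq V]

/-- Lazy burning closure on a hypergraph given by its edge set. -/
inductive LazyBurned (E : Finset (Finset V)) (B : Set V) : V → Prop
  | init (v : V) (hv : v ∈ B) : LazyBurned E B v
  | spread (v : V) (h : Finset V) (hE : h ∈ E) (hcard : 2 ≤ h.card) (hv : v ∈ h)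
      (hall : ∀ u ∈ h, u ≠ v → LazyBurned E B u) : LazyBurned E B v

def IsLazyBurningSet (E : Finset (Finset V)) (B : Set V) : Prop := ∀ v, LazyBurned E B v

noncomputable def lazyBurningNumber (E : Finset (Finset V)) : ℕ :=
  sInf {n | ∃ B : Set V, B.ncard = n ∧ IsLazyBurningSet E B}

/-- one round of propagation in hypergraph burning -/
def hSpread (E : Finset (Finset V)) (S : Set V) : Set V :=
  S ∪ {v | ∃ h ∈ E, 2 ≤ h.card ∧ v ∈ h ∧ ∀ u ∈ h, u ≠ v → u ∈ S}

/-- burned vertices after t rounds of the (round-based) hypergraph burning process -/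
def hBurnedAt (E : Finset (Finset V)) {k : ℕ} (s : Fin k → V) : ℕ → Set V
  | 0 => ∅
  | t + 1 => hSpread E (hBurnedAt E s t) ∪ {v | ∃ ht : t < k, v = s ⟨t, ht⟩}

noncomputable def hBurningNumber (E : Finset (Finset V)) : ℕ :=
  sInf {k | ∃ s : Fin k → V,
    (∀ t : Fin k, s t ∉ hBurnedAt E s (t : ℕ)) ∧ hBurnedAt E s k = Set.univ}

/-- incidence graph of a hypergraph -/
def IG (E : Finset (Finset V)) : SimpleGraph (V ⊕ {h // h ∈ E}) where
  Adj x y := (∃ v h, x = Sum.inl v ∧ y = Sum.inr h ∧ v ∈ (h : Finset V)) ∨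
    (∃ v h, x = Sum.inr h ∧ y = Sum.inl v ∧ v ∈ (h : Finset V))
  symm := by
    constructor
    rintro x y (⟨v, h, rfl, rfl, hm⟩ | ⟨v, h, rfl, rfl, hm⟩)
    · exact Or.inr ⟨v, h, rfl, rfl, hm⟩
    · exact Or.inl ⟨v, h, rfl, rfl, hm⟩
  loopless := by
    constructor
    rintro x (⟨v, h, rfl, he, hm⟩ | ⟨v, h, rfl, he, hm⟩) <;> simp at he

/-- connectivity relation of a hypergraph -/
def hconn (E : Finset (Finset V)) : V → V → Prop :=
  Relation.ReflTransGen (fun u v => ∃ h ∈ E, u ∈ h ∧ v ∈ h)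

end Hypergraph

open scoped Classical in
/-- The graph `G` of Example: edges `12, 13, 23, 34, 35, 36, 46`. -/
noncomputable def exG : SimpleGraph (Fin 6) :=
  SimpleGraph.fromEdgeSet {s(0, 1), s(0, 2), s(1, 2), s(2, 3), s(2, 4), s(2, 5), s(3, 5)}

open scoped Classical in
/-- The graph `H` of Example: edges `12, 23, 24, 34, 35, 45, 56`. -/
noncomputable def exH : SimpleGraph (Fin 6) :=
  SimpleGraph.fromEdgeSet {s(0, 1), s(1, 2), s(1, 3), s(2, 3), s(2, 4), s(3, 4), s(4, 5)}



/-! ### Auxiliary material for the proof -/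

section Aux

open SimpleGraph Polynomial

/-- Computable copy of `exG`. -/
def Gb : SimpleGraph (Fin 6) where
  Adj a b := (a.val, b.val) ∈ [(0,1),(0,2),(1,2),(2,3),(2,4),(2,5),(3,5)] ∨
    (b.val, a.val) ∈ [(0,1),(0,2),(1,2),(2,3),(2,4),(2,5),(3,5)]
  symm := by constructor; intro a b; revert a b; decide
  loopless := by constructor; intro a; revert a; decide

instance : DecidableRel Gb.Adj := fun a b => by unfold Gb; infer_instance

/-- Computable copy of `exH`. -/
def Hb : SimpleGraph (Fin 6) where
  Adj a b := (a.val, b.val) ∈ [(0,1),(1,2),(1,3),(2,3),(2,4),(3,4),(4,5)] ∨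
    (b.val, a.val) ∈ [(0,1),(1,2),(1,3),(2,3),(2,4),(3,4),(4,5)]
  symm := by constructor; intro a b; revert a b; decide
  loopless := by constructor; intro a; revert a; decide

instance : DecidableRel Hb.Adj := fun a b => by unfold Hb; infer_instance

lemma exG_eq : exG = Gb := by
  ext a b
  rw [exG, SimpleGraph.fromEdgeSet_adj]
  simp only [Set.mem_insert_iff, Set.mem_singleton_iff]
  revert a b
  decide

lemma exH_eq : exH = Hb := by
  ext a b
  rw [exH, SimpleGraph.fromEdgeSet_adj]
  simp only [Set.mem_insert_iff, Set.mem_singleton_iff]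
  revert a b
  decide

/-- Adjacency matrix of `exG`. -/
def MG : Matrix (Fin 6) (Fin 6) ℤ :=
  !![0,1,1,0,0,0; 1,0,1,0,0,0; 1,1,0,1,1,1; 0,0,1,0,0,1; 0,0,1,0,0,0; 0,0,1,1,0,0]

/-- Adjacency matrix of `exH`. -/
def MH : Matrix (Fin 6) (Fin 6) ℤ :=
  !![0,1,0,0,0,0; 1,0,1,1,0,0; 0,1,0,1,1,0; 0,1,1,0,1,0; 0,0,1,1,0,1; 0,0,0,0,1,0]

open scoped Classical in
lemma adjG : exG.adjMatrix ℤ = MG := by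
  ext i j
  by_cases h : Gb.Adj i j <;>
    simp only [SimpleGraph.adjMatrix_apply, exG_eq, h, if_true, if_false] <;>
    · revert h; fin_cases i <;> fin_cases j <;> decide

open scoped Classical in
lemma adjH : exH.adjMatrix ℤ = MH := by
  ext i j
  by_cases h : Hb.Adj i j <;>
    simp only [SimpleGraph.adjMatrix_apply, exH_eq, h, if_true, if_false] <;>
    · revert h; fin_cases i <;> fin_cases j <;> decide

lemma consv5 {α : Type*} (a : α) (f : Fin 5 → α) : Matrix.vecCons a f 5 = f 4 := rfl
lemma consv4 {α : Type*} (a : α) (f : Fin 4 → α) : Matrix.vecCons a f 4 = f 3 := rfl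
lemma consv3 {α : Type*} (a : α) (f : Fin 3 → α) : Matrix.vecCons a f 3 = f 2 := rfl
lemma consv2 {α : Type*} (a : α) (f : Fin 2 → α) : Matrix.vecCons a f 2 = f 1 := rfl
lemma consv1 {α : Type*} (a : α) (f : Fin 1 → α) : Matrix.vecCons a f 1 = f 0 := rfl

lemma appl5 {α : Type*} (a b c d e f : α) : ![a,b,c,d,e,f] 5 = f := rfl
lemma appl3 {α : Type*} (a b c d e : α) (h) : ![a,b,c,d,e] ⟨((3:Fin 4):ℕ), h⟩ = d := rfl

lemma cmG : Matrix.charmatrix MG = !![X,-1,-1,0,0,0; -1,X,-1,0,0,0; -1,-1,X,-1,-1,-1;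
    0,0,-1,X,0,-1; 0,0,-1,0,X,0; 0,0,-1,-1,0,X] := by
  apply Matrix.ext
  intro i j
  fin_cases i <;> fin_cases j <;>
    simp [Matrix.charmatrix_apply_eq, Matrix.charmatrix_apply_ne, MG, Matrix.vecHead,
      Matrix.vecTail, consv5, consv4, consv3, consv2, consv1]

lemma cmH : Matrix.charmatrix MH = !![X,-1,0,0,0,0; -1,X,-1,-1,0,0; 0,-1,X,-1,-1,0;
    0,-1,-1,X,-1,0; 0,0,-1,-1,X,-1; 0,0,0,0,-1,X] := by
  apply Matrix.ext
  intro i j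
  fin_cases i <;> fin_cases j <;>
    simp [Matrix.charmatrix_apply_eq, Matrix.charmatrix_apply_ne, MH, Matrix.vecHead,
      Matrix.vecTail, consv5, consv4, consv3, consv2, consv1]

set_option maxRecDepth 10000 in
set_option maxHeartbeats 4000000 in
lemma detG : (!![X,-1,-1,0,0,0; -1,X,-1,0,0,0; -1,-1,X,-1,-1,-1;
    0,0,-1,X,0,-1; 0,0,-1,0,X,0; 0,0,-1,-1,0,X] : Matrix (Fin 6) (Fin 6) (Polynomial ℤ)).det =
    (X ^ 6 - 7 * X ^ 4 - 4 * X ^ 3 + 7 * X ^ 2 + 4 * X - 1 : Polynomial ℤ) := by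
  simp (config := { decide := true }) [Matrix.det_succ_row_zero, Fin.sum_univ_succ, Fin.succAbove,
    Fin.castSucc, Fin.castAdd, Fin.castLE, Fin.succ, appl5, appl3]
  ring

set_option maxRecDepth 10000 in
set_option maxHeartbeats 4000000 in
lemma detH : (!![X,-1,0,0,0,0; -1,X,-1,-1,0,0; 0,-1,X,-1,-1,0;
    0,-1,-1,X,-1,0; 0,0,-1,-1,X,-1; 0,0,0,0,-1,X] : Matrix (Fin 6) (Fin 6) (Polynomial ℤ)).det =
    (X ^ 6 - 7 * X ^ 4 - 4 * X ^ 3 + 7 * X ^ 2 + 4 * X - 1 : Polynomial ℤ) := by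
  simp (config := { decide := true }) [Matrix.det_succ_row_zero, Fin.sum_univ_succ, Fin.succAbove,
    Fin.castSucc, Fin.castAdd, Fin.castLE, Fin.succ, appl5, appl3]
  ring

/-! #### edist helpers -/

variable {V : Type*} {G : SimpleGraph V} {u v : V}

lemma adj_edist_le_one (h : G.Adj u v) : G.edist u v ≤ 1 :=
  le_of_eq (SimpleGraph.edist_eq_one_iff_adj.mpr h)

lemma one_le_edist_of_ne (h : u ≠ v) : 1 ≤ G.edist u v :=
  ENat.one_le_iff_ne_zero.mpr (fun h0 => h (SimpleGraph.edist_eq_zero_iff.mp h0))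

lemma eq_or_adj_of_edist_le_one (h : G.edist u v ≤ 1) : u = v ∨ G.Adj u v := by
  rcases eq_or_lt_of_le h with h1 | h1
  · exact Or.inr (SimpleGraph.edist_eq_one_iff_adj.mp h1)
  · exact Or.inl (SimpleGraph.edist_eq_zero_iff.mp (ENat.lt_one_iff_eq_zero.mp h1))

lemma two_le_edist (hne : u ≠ v) (hadj : ¬ G.Adj u v) : 2 ≤ G.edist u v := by
  by_contra h
  push_neg at h
  have h1 : G.edist u v ≤ 1 :=
    (ENat.lt_add_one_iff (n := 1) (by simp)).mp (by rwa [one_add_one_eq_two])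
  rcases eq_or_adj_of_edist_le_one h1 with h2 | h2
  exacts [hne h2, hadj h2]

lemma edist_le_two (w : V) (h1 : G.Adj u w) (h2 : G.Adj w v) : G.edist u v ≤ 2 :=
  calc G.edist u v ≤ G.edist u w + G.edist w v := SimpleGraph.edist_triangle
    _ ≤ 1 + 1 := add_le_add (adj_edist_le_one h1) (adj_edist_le_one h2)
    _ = 2 := one_add_one_eq_two

/-! #### burning number helpers -/

lemma bn_not_zero (G : SimpleGraph (Fin 6)) :
    0 ∉ {k | ∃ s : Fin k → Fin 6, G.IsBurningSeq s} := by
  rintro ⟨s, -, hc⟩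
  have h0 : (0 : Fin 6) ∈ ⋃ l : Fin 0, G.closedBall (s l) (0 - 1 - (l : ℕ)) :=
    hc ▸ Set.mem_univ _
  simp at h0

lemma bn_not_one (G : SimpleGraph (Fin 6)) :
    1 ∉ {k | ∃ s : Fin k → Fin 6, G.IsBurningSeq s} := by
  rintro ⟨s, -, hc⟩
  have h : ∀ v : Fin 6, s 0 = v := by
    intro v
    have hv : v ∈ ⋃ l : Fin 1, G.closedBall (s l) (1 - 1 - (l : ℕ)) := hc ▸ Set.mem_univ v
    obtain ⟨l, hl⟩ := Set.mem_iUnion.mp hv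
    fin_cases l
    have hl' : G.edist (s 0) v ≤ (0 : ℕ∞) := by exact_mod_cast hl
    exact SimpleGraph.edist_eq_zero_iff.mp (le_antisymm hl' (zero_le))
  exact absurd ((h 0).symm.trans (h 1)) (by decide)

lemma sInf_eq_of {S : Set ℕ} {n : ℕ} (hn : n ∈ S) (h : ∀ m ∈ S, n ≤ m) : sInf S = n :=
  le_antisymm (Nat.sInf_le hn) (h _ (Nat.sInf_mem ⟨n, hn⟩))

lemma exG_mem2 : 2 ∈ {k | ∃ s : Fin k → Fin 6, exG.IsBurningSeq s} := by
  refine ⟨![2, 0], ?_, ?_⟩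
  · intro i j hij
    fin_cases i <;> fin_cases j
    · exact absurd rfl hij
    · norm_num
      exact one_le_edist_of_ne (by decide)
    · norm_num
      exact one_le_edist_of_ne (by decide)
    · exact absurd rfl hij
  · apply Set.eq_univ_of_forall
    intro v
    apply Set.mem_iUnion.mpr
    refine ⟨0, ?_⟩
    show exG.edist (![2, 0] 0) v ≤ ((2 - 1 - ((0 : Fin 2) : ℕ) : ℕ) : ℕ∞)
    norm_num
    fin_cases v
    · exact adj_edist_le_one (by rw [exG_eq]; decide)
    · exact adj_edist_le_one (by rw [exG_eq]; decide)
    · simp [SimpleGraph.edist_self]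
    · exact adj_edist_le_one (by rw [exG_eq]; decide)
    · exact adj_edist_le_one (by rw [exG_eq]; decide)
    · exact adj_edist_le_one (by rw [exG_eq]; decide)

lemma exH_mem3 : 3 ∈ {k | ∃ s : Fin k → Fin 6, exH.IsBurningSeq s} := by
  refine ⟨![2, 0, 5], ?_, ?_⟩
  · intro i j hij
    fin_cases i <;> fin_cases j
    · exact absurd rfl hij
    · norm_num
      exact one_le_edist_of_ne (by decide)
    · norm_num
      exact two_le_edist (by decide) (by rw [exH_eq]; decide)
    · norm_num
      exact one_le_edist_of_ne (by decide)
    · exact absurd rfl hij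
    · norm_num
      exact one_le_edist_of_ne (by decide)
    · norm_num
      exact two_le_edist (by decide) (by rw [exH_eq]; decide)
    · norm_num
      exact one_le_edist_of_ne (by decide)
    · exact absurd rfl hij
  · apply Set.eq_univ_of_forall
    intro v
    apply Set.mem_iUnion.mpr
    refine ⟨0, ?_⟩
    show exH.edist (![2, 0, 5] 0) v ≤ ((3 - 1 - ((0 : Fin 3) : ℕ) : ℕ) : ℕ∞)
    norm_num
    fin_cases v
    · exact edist_le_two 1 (by rw [exH_eq]; decide) (by rw [exH_eq]; decide)
    · exact le_trans (adj_edist_le_one (by rw [exH_eq]; decide)) one_le_two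
    · simp [SimpleGraph.edist_self]
    · exact le_trans (adj_edist_le_one (by rw [exH_eq]; decide)) one_le_two
    · exact le_trans (adj_edist_le_one (by rw [exH_eq]; decide)) one_le_two
    · exact edist_le_two 4 (by rw [exH_eq]; decide) (by rw [exH_eq]; decide)

set_option maxRecDepth 10000 in
lemma exH_not2 : 2 ∉ {k | ∃ s : Fin k → Fin 6, exH.IsBurningSeq s} := by
  rintro ⟨s, -, hc⟩
  have h : ∀ v : Fin 6, (s 0 = v ∨ Hb.Adj (s 0) v) ∨ s 1 = v := by
    intro v
    have hv : v ∈ ⋃ l : Fin 2, exH.closedBall (s l) (2 - 1 - (l : ℕ)) := hc ▸ Set.mem_univ v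
    obtain ⟨l, hl⟩ := Set.mem_iUnion.mp hv
    fin_cases l
    · have hl' : exH.edist (s 0) v ≤ (1 : ℕ∞) := by exact_mod_cast hl
      rcases eq_or_adj_of_edist_le_one hl' with h | h
      · exact Or.inl (Or.inl h)
      · exact Or.inl (Or.inr (by rw [exH_eq] at h; exact h))
    · have hl' : exH.edist (s 1) v ≤ (0 : ℕ∞) := by exact_mod_cast hl
      exact Or.inr (SimpleGraph.edist_eq_zero_iff.mp (le_antisymm hl' (zero_le)))
  exact absurd ⟨s 0, s 1, h⟩
    (by decide : ¬ ∃ a b : Fin 6, ∀ v : Fin 6, (a = v ∨ Hb.Adj a v) ∨ b = v)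

lemma exG_bn : exG.burningNumber = 2 := by
  apply sInf_eq_of exG_mem2
  intro m hm
  by_contra hlt
  push_neg at hlt
  interval_cases m
  · exact bn_not_zero exG hm
  · exact bn_not_one exG hm

lemma exH_bn : exH.burningNumber = 3 := by
  apply sInf_eq_of exH_mem3
  intro m hm
  by_contra hlt
  push_neg at hlt
  interval_cases m
  · exact bn_not_zero exH hm
  · exact bn_not_one exH hm
  · exact exH_not2 hm

set_option maxRecDepth 10000 in
lemma noniso : ¬ Nonempty (exG ≃g exH) := by
  rintro ⟨f⟩
  have h2 : ∀ u : Fin 6, u ≠ 2 → exG.Adj 2 u := by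
    rw [exG_eq]; decide
  have hf : ∀ w : Fin 6, w ≠ f 2 → Hb.Adj (f 2) w := by
    intro w hw
    obtain ⟨u, rfl⟩ := f.surjective w
    have hu : u ≠ 2 := fun h => hw (by rw [h])
    have := f.map_adj_iff.mpr (h2 u hu)
    have hiff : ∀ a b : Fin 6, exH.Adj a b ↔ Hb.Adj a b := fun a b => by rw [exH_eq]
    exact (hiff _ _).mp this
  exact absurd ⟨f 2, hf⟩
    (by decide : ¬ ∃ a : Fin 6, ∀ w : Fin 6, w ≠ a → Hb.Adj a w)

open Polynomial in
open scoped Classical in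
set_option maxRecDepth 10000 in
lemma charG : (exG.adjMatrix ℤ).charpoly =
    X ^ 6 - 7 * X ^ 4 - 4 * X ^ 3 + 7 * X ^ 2 + 4 * X - 1 := by
  rw [Matrix.charpoly, adjG, cmG, detG]

open Polynomial in
open scoped Classical in
set_option maxRecDepth 10000 in
lemma charH : (exH.adjMatrix ℤ).charpoly =
    X ^ 6 - 7 * X ^ 4 - 4 * X ^ 3 + 7 * X ^ 2 + 4 * X - 1 := by
  rw [Matrix.charpoly, adjH, cmH, detH]

end Aux

open Polynomial in
open scoped Classical in
/-- There exist non-isomorphic cospectral graphs on 6 vertices, with characteristic polynomial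
`λ^6 - 7λ^4 - 4λ^3 + 7λ^2 + 4λ - 1`, with burning numbers `2` and `3`. -/
theorem stmt16 :
    ¬ Nonempty (exG ≃g exH) ∧
    (exG.adjMatrix ℤ).charpoly =
      X ^ 6 - 7 * X ^ 4 - 4 * X ^ 3 + 7 * X ^ 2 + 4 * X - 1 ∧
    (exH.adjMatrix ℤ).charpoly =
      X ^ 6 - 7 * X ^ 4 - 4 * X ^ 3 + 7 * X ^ 2 + 4 * X - 1 ∧
    exG.burningNumber = 2 ∧ exH.burningNumber = 3 := by
  exact ⟨noniso, charG, charH, exG_bn, exH_bn⟩
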